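/- If ℓ = {a, b, a·b} is a triple of Veblen points in a Steiner triple system S of order v, then the number of Fano subplanes (sub-STS(7)s) of S containing ℓ is (v−3)/4. -/

import Mathlib

lemma third_point {V : Type} [DecidableEq V] {t : Finset V} (h : t.card = 3) {u v : V}
    (hu : u ∈ t) (hv : v ∈ t) (huv : u ≠ v) :
    ∃ w, w ≠ u ∧ w ≠ v ∧ t = {u, v, w} := by
  obtain ⟨x, y, z, hxy, hxz, hyz, rfl⟩ := Finset.card_eq_three.1 h
  simp only [Finset.mem_insert, Finset.mem_singleton] at hu hv
  rcases hu with rfl | rfl | rfl <;> rcases hv with rfl | rfl | rfl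
  · exact absurd rfl huv
  · exact ⟨z, hxz.symm, hyz.symm, rfl⟩
  · exact ⟨y, hxy.symm, hyz, by ext; simp; tauto⟩
  · exact ⟨z, hyz.symm, hxz.symm, by ext; simp; tauto⟩
  · exact absurd rfl huv
  · exact ⟨x, hxy, hxz, by ext; simp; tauto⟩
  · exact ⟨y, hyz, hxy.symm, by ext; simp; tauto⟩
  · exact ⟨x, hxz, hxy, by ext; simp; tauto⟩
  · exact absurd rfl huv

def IsVeblenPoint {V : Type} [DecidableEq V] (T : Finset (Finset V)) (x : V) : Prop :=
  ∀ a b c d y : V,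
    ({x, a, b} : Finset V) ∈ T → ({x, c, d} : Finset V) ∈ T →
    ({y, a, c} : Finset V) ∈ T → ({y, b, d} : Finset V) ∈ T

set_option maxHeartbeats 4000000 in
theorem fano_count_through_veblen_triple {V : Type} [Fintype V] [DecidableEq V]
    (T : Finset (Finset V))
    (h3 : ∀ t ∈ T, t.card = 3)
    (hpair : ∀ x y : V, x ≠ y → ∃! t, t ∈ T ∧ x ∈ t ∧ y ∈ t)
    (a b c : V) (hl : ({a, b, c} : Finset V) ∈ T)
    (ha : IsVeblenPoint T a) (hb : IsVeblenPoint T b) (hc : IsVeblenPoint T c) :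
    {R : Finset V | R.card = 7 ∧
        (∀ t ∈ T, 2 ≤ (t ∩ R).card → t ⊆ R) ∧
        ({a, b, c} : Finset V) ⊆ R}.ncard = (Fintype.card V - 3) / 4 := by
  classical
  have hlcard : ({a, b, c} : Finset V).card = 3 := h3 _ hl
  have hab : a ≠ b := by
    rintro rfl
    rw [show ({a, a, c} : Finset V) = {a, c} from by ext; simp; try tauto] at hlcard
    have h2 := Finset.card_insert_le a ({c} : Finset V)
    rw [hlcard] at h2; simp at h2
  have hac : a ≠ c := by
    rintro rfl
    rw [show ({a, b, a} : Finset V) = {a, b} from by ext; simp; try tauto] at hlcard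
    have h2 := Finset.card_insert_le a ({b} : Finset V)
    rw [hlcard] at h2; simp at h2
  have hbc : b ≠ c := by
    rintro rfl
    rw [show ({a, b, b} : Finset V) = {a, b} from by ext; simp; try tauto] at hlcard
    have h2 := Finset.card_insert_le a ({b} : Finset V)
    rw [hlcard] at h2; simp at h2
  have hline_uniq : ∀ {t t' : Finset V}, t ∈ T → t' ∈ T → ∀ {u v : V}, u ≠ v →
      u ∈ t → v ∈ t → u ∈ t' → v ∈ t' → t = t' := by
    intro t t' ht ht' u v huv h1 h2 h3' h4
    obtain ⟨s, _, hs⟩ := hpair u v huv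
    exact (hs t ⟨ht, h1, h2⟩).trans (hs t' ⟨ht', h3', h4⟩).symm
  have key : ∀ x : V, x ∉ ({a, b, c} : Finset V) →
      ∃! R : Finset V, (R.card = 7 ∧ (∀ t ∈ T, 2 ≤ (t ∩ R).card → t ⊆ R) ∧
        ({a, b, c} : Finset V) ⊆ R) ∧ x ∈ R := by
    intro x hx
    simp only [Finset.mem_insert, Finset.mem_singleton, not_or] at hx
    obtain ⟨hxa, hxb, hxc⟩ := hx
    have hax : a ≠ x := fun h => hxa h.symm
    have hbx : b ≠ x := fun h => hxb h.symm
    have hcx : c ≠ x := fun h => hxc h.symm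
    obtain ⟨ta, ⟨hta, haa, hxa'⟩, _⟩ := hpair a x hax
    obtain ⟨p, hpa, hpx, htaeq⟩ := third_point (h3 ta hta) haa hxa' hax
    have hL2 : ({a, x, p} : Finset V) ∈ T := htaeq ▸ hta
    obtain ⟨tb, ⟨htb, hbb, hxb'⟩, _⟩ := hpair b x hbx
    obtain ⟨q, hqb, hqx, htbeq⟩ := third_point (h3 tb htb) hbb hxb' hbx
    have hL3 : ({b, x, q} : Finset V) ∈ T := htbeq ▸ htb
    obtain ⟨tc, ⟨htc, hcc, hxc'⟩, _⟩ := hpair c x hcx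
    obtain ⟨r, hrc, hrx, htceq⟩ := third_point (h3 tc htc) hcc hxc' hcx
    have hL4 : ({c, x, r} : Finset V) ∈ T := htceq ▸ htc
    -- permuted copies
    have hcab : ({c, a, b} : Finset V) ∈ T := by
      rwa [show ({c, a, b} : Finset V) = {a, b, c} from by ext; simp; tauto]
    have hcba : ({c, b, a} : Finset V) ∈ T := by
      rwa [show ({c, b, a} : Finset V) = {a, b, c} from by ext; simp; tauto]
    have hL2' : ({p, a, x} : Finset V) ∈ T := by
      rwa [show ({p, a, x} : Finset V) = {a, x, p} from by ext; simp; tauto]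
    have hL3' : ({q, b, x} : Finset V) ∈ T := by
      rwa [show ({q, b, x} : Finset V) = {b, x, q} from by ext; simp; tauto]
    -- Veblen consequences
    have hL5 : ({p, b, r} : Finset V) ∈ T := hc a b x r p hcab hL4 hL2'
    have hL6 : ({q, a, r} : Finset V) ∈ T := hc b a x r q hcba hL4 hL3'
    have hL7 : ({q, c, p} : Finset V) ∈ T := ha b c x p q hl hL2 hL3'
    -- distinctness
    have hpb : p ≠ b := by
      intro h
      rw [h] at hL2
      have heq := hline_uniq hL2 hl hab (by simp) (by simp) (by simp) (by simp)
      have : x ∈ ({a, b, c} : Finset V) := heq ▸ (by simp : x ∈ ({a, x, b} : Finset V))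
      simp only [Finset.mem_insert, Finset.mem_singleton] at this
      rcases this with h' | h' | h'
      exacts [hxa h', hxb h', hxc h']
    have hpc : p ≠ c := by
      intro h
      rw [h] at hL2
      have heq := hline_uniq hL2 hl hac (by simp) (by simp) (by simp) (by simp)
      have : x ∈ ({a, b, c} : Finset V) := heq ▸ (by simp : x ∈ ({a, x, c} : Finset V))
      simp only [Finset.mem_insert, Finset.mem_singleton] at this
      rcases this with h' | h' | h'
      exacts [hxa h', hxb h', hxc h']
    have hqa : q ≠ a := by
      intro h
      rw [h] at hL3
      have heq := hline_uniq hL3 hl (Ne.symm hab) (by simp) (by simp) (by simp) (by simp)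
      have : x ∈ ({a, b, c} : Finset V) := heq ▸ (by simp : x ∈ ({b, x, a} : Finset V))
      simp only [Finset.mem_insert, Finset.mem_singleton] at this
      rcases this with h' | h' | h'
      exacts [hxa h', hxb h', hxc h']
    have hqc : q ≠ c := by
      intro h
      rw [h] at hL3
      have heq := hline_uniq hL3 hl hbc (by simp) (by simp) (by simp) (by simp)
      have : x ∈ ({a, b, c} : Finset V) := heq ▸ (by simp : x ∈ ({b, x, c} : Finset V))
      simp only [Finset.mem_insert, Finset.mem_singleton] at this
      rcases this with h' | h' | h'
      exacts [hxa h', hxb h', hxc h']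
    have hra : r ≠ a := by
      intro h
      rw [h] at hL4
      have heq := hline_uniq hL4 hl (Ne.symm hac) (by simp) (by simp) (by simp) (by simp)
      have : x ∈ ({a, b, c} : Finset V) := heq ▸ (by simp : x ∈ ({c, x, a} : Finset V))
      simp only [Finset.mem_insert, Finset.mem_singleton] at this
      rcases this with h' | h' | h'
      exacts [hxa h', hxb h', hxc h']
    have hrb : r ≠ b := by
      intro h
      rw [h] at hL4
      have heq := hline_uniq hL4 hl (Ne.symm hbc) (by simp) (by simp) (by simp) (by simp)
      have : x ∈ ({a, b, c} : Finset V) := heq ▸ (by simp : x ∈ ({c, x, b} : Finset V))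
      simp only [Finset.mem_insert, Finset.mem_singleton] at this
      rcases this with h' | h' | h'
      exacts [hxa h', hxb h', hxc h']
    have hqp : q ≠ p := by
      intro h
      rw [h] at hL3
      have heq := hline_uniq hL2 hL3 hpx.symm (by simp) (by simp) (by simp) (by simp)
      have : a ∈ ({b, x, p} : Finset V) := heq ▸ (by simp : a ∈ ({a, x, p} : Finset V))
      simp only [Finset.mem_insert, Finset.mem_singleton] at this
      rcases this with h | h | h
      · exact hab h
      · exact hax h
      · exact hpa h.symm
    have hrp : r ≠ p := by
      intro h
      rw [h] at hL4
      have heq := hline_uniq hL2 hL4 hpx.symm (by simp) (by simp) (by simp) (by simp)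
      have : a ∈ ({c, x, p} : Finset V) := heq ▸ (by simp : a ∈ ({a, x, p} : Finset V))
      simp only [Finset.mem_insert, Finset.mem_singleton] at this
      rcases this with h | h | h
      · exact hac h
      · exact hax h
      · exact hpa h.symm
    have hrq : r ≠ q := by
      intro h
      rw [h] at hL4
      have heq := hline_uniq hL3 hL4 hqx.symm (by simp) (by simp) (by simp) (by simp)
      have : b ∈ ({c, x, q} : Finset V) := heq ▸ (by simp : b ∈ ({b, x, q} : Finset V))
      simp only [Finset.mem_insert, Finset.mem_singleton] at this
      rcases this with h | h | h
      · exact hbc h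
      · exact hbx h
      · exact hqb h.symm
    -- the Fano plane
    have hR0card : ({a, b, c, x, p, q, r} : Finset V).card = 7 := by
      rw [Finset.card_insert_of_notMem (by
            simp [hab, hac, hax, hpa.symm, hqa.symm, hra.symm]),
          Finset.card_insert_of_notMem (by
            simp [hbc, hbx, hpb.symm, hqb.symm, hrb.symm]),
          Finset.card_insert_of_notMem (by
            simp [hcx, hpc.symm, hqc.symm, hrc.symm]),
          Finset.card_insert_of_notMem (by
            simp [hpx.symm, hqx.symm, hrx.symm]),
          Finset.card_insert_of_notMem (by simp [hqp.symm, hrp.symm]),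
          Finset.card_insert_of_notMem (by simp [hrq.symm]),
          Finset.card_singleton]
    have sub1 : ({a, b, c} : Finset V) ⊆ {a, b, c, x, p, q, r} := by
      intro z hz
      simp only [Finset.mem_insert, Finset.mem_singleton] at hz ⊢
      rcases hz with rfl | rfl | rfl <;> simp
    have sub2 : ({a, x, p} : Finset V) ⊆ {a, b, c, x, p, q, r} := by
      intro z hz
      simp only [Finset.mem_insert, Finset.mem_singleton] at hz ⊢
      rcases hz with rfl | rfl | rfl <;> simp
    have sub3 : ({b, x, q} : Finset V) ⊆ {a, b, c, x, p, q, r} := by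
      intro z hz
      simp only [Finset.mem_insert, Finset.mem_singleton] at hz ⊢
      rcases hz with rfl | rfl | rfl <;> simp
    have sub4 : ({c, x, r} : Finset V) ⊆ {a, b, c, x, p, q, r} := by
      intro z hz
      simp only [Finset.mem_insert, Finset.mem_singleton] at hz ⊢
      rcases hz with rfl | rfl | rfl <;> simp
    have sub5 : ({p, b, r} : Finset V) ⊆ {a, b, c, x, p, q, r} := by
      intro z hz
      simp only [Finset.mem_insert, Finset.mem_singleton] at hz ⊢
      rcases hz with rfl | rfl | rfl <;> simp
    have sub6 : ({q, a, r} : Finset V) ⊆ {a, b, c, x, p, q, r} := by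
      intro z hz
      simp only [Finset.mem_insert, Finset.mem_singleton] at hz ⊢
      rcases hz with rfl | rfl | rfl <;> simp
    have sub7 : ({q, c, p} : Finset V) ⊆ {a, b, c, x, p, q, r} := by
      intro z hz
      simp only [Finset.mem_insert, Finset.mem_singleton] at hz ⊢
      rcases hz with rfl | rfl | rfl <;> simp
    have hclosed : ∀ t ∈ T, 2 ≤ (t ∩ ({a, b, c, x, p, q, r} : Finset V)).card →
        t ⊆ ({a, b, c, x, p, q, r} : Finset V) := by
      intro t ht hcard2
      obtain ⟨u, hu, v, hv, huv⟩ := Finset.one_lt_card.1 hcard2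
      rw [Finset.mem_inter] at hu hv
      obtain ⟨hut, huR⟩ := hu
      obtain ⟨hvt, hvR⟩ := hv
      have m1 : ∀ u v w : V, u ∈ ({u, v, w} : Finset V) :=
        fun u v w => Finset.mem_insert_self u {v, w}
      have m2 : ∀ u v w : V, v ∈ ({u, v, w} : Finset V) :=
        fun u v w => Finset.mem_insert_of_mem (Finset.mem_insert_self v {w})
      have m3 : ∀ u v w : V, w ∈ ({u, v, w} : Finset V) :=
        fun u v w => Finset.mem_insert_of_mem (Finset.mem_insert_of_mem (Finset.mem_singleton_self w))
      have cover : ∃ L, L ∈ T ∧ u ∈ L ∧ v ∈ L ∧ L ⊆ ({a, b, c, x, p, q, r} : Finset V) := by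
        simp only [Finset.mem_insert, Finset.mem_singleton] at huR hvR
        rcases huR with rfl | rfl | rfl | rfl | rfl | rfl | rfl <;>
          rcases hvR with rfl | rfl | rfl | rfl | rfl | rfl | rfl <;>
          first
            | exact absurd rfl huv
            | exact ⟨_, hl, m1 _ _ _, m2 _ _ _, sub1⟩
            | exact ⟨_, hl, m1 _ _ _, m3 _ _ _, sub1⟩
            | exact ⟨_, hl, m2 _ _ _, m1 _ _ _, sub1⟩
            | exact ⟨_, hl, m2 _ _ _, m3 _ _ _, sub1⟩
            | exact ⟨_, hl, m3 _ _ _, m1 _ _ _, sub1⟩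
            | exact ⟨_, hl, m3 _ _ _, m2 _ _ _, sub1⟩
            | exact ⟨_, hL2, m1 _ _ _, m2 _ _ _, sub2⟩
            | exact ⟨_, hL2, m1 _ _ _, m3 _ _ _, sub2⟩
            | exact ⟨_, hL2, m2 _ _ _, m1 _ _ _, sub2⟩
            | exact ⟨_, hL2, m2 _ _ _, m3 _ _ _, sub2⟩
            | exact ⟨_, hL2, m3 _ _ _, m1 _ _ _, sub2⟩
            | exact ⟨_, hL2, m3 _ _ _, m2 _ _ _, sub2⟩
            | exact ⟨_, hL3, m1 _ _ _, m2 _ _ _, sub3⟩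
            | exact ⟨_, hL3, m1 _ _ _, m3 _ _ _, sub3⟩
            | exact ⟨_, hL3, m2 _ _ _, m1 _ _ _, sub3⟩
            | exact ⟨_, hL3, m2 _ _ _, m3 _ _ _, sub3⟩
            | exact ⟨_, hL3, m3 _ _ _, m1 _ _ _, sub3⟩
            | exact ⟨_, hL3, m3 _ _ _, m2 _ _ _, sub3⟩
            | exact ⟨_, hL4, m1 _ _ _, m2 _ _ _, sub4⟩
            | exact ⟨_, hL4, m1 _ _ _, m3 _ _ _, sub4⟩
            | exact ⟨_, hL4, m2 _ _ _, m1 _ _ _, sub4⟩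
            | exact ⟨_, hL4, m2 _ _ _, m3 _ _ _, sub4⟩
            | exact ⟨_, hL4, m3 _ _ _, m1 _ _ _, sub4⟩
            | exact ⟨_, hL4, m3 _ _ _, m2 _ _ _, sub4⟩
            | exact ⟨_, hL5, m1 _ _ _, m2 _ _ _, sub5⟩
            | exact ⟨_, hL5, m1 _ _ _, m3 _ _ _, sub5⟩
            | exact ⟨_, hL5, m2 _ _ _, m1 _ _ _, sub5⟩
            | exact ⟨_, hL5, m2 _ _ _, m3 _ _ _, sub5⟩
            | exact ⟨_, hL5, m3 _ _ _, m1 _ _ _, sub5⟩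
            | exact ⟨_, hL5, m3 _ _ _, m2 _ _ _, sub5⟩
            | exact ⟨_, hL6, m1 _ _ _, m2 _ _ _, sub6⟩
            | exact ⟨_, hL6, m1 _ _ _, m3 _ _ _, sub6⟩
            | exact ⟨_, hL6, m2 _ _ _, m1 _ _ _, sub6⟩
            | exact ⟨_, hL6, m2 _ _ _, m3 _ _ _, sub6⟩
            | exact ⟨_, hL6, m3 _ _ _, m1 _ _ _, sub6⟩
            | exact ⟨_, hL6, m3 _ _ _, m2 _ _ _, sub6⟩
            | exact ⟨_, hL7, m1 _ _ _, m2 _ _ _, sub7⟩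
            | exact ⟨_, hL7, m1 _ _ _, m3 _ _ _, sub7⟩
            | exact ⟨_, hL7, m2 _ _ _, m1 _ _ _, sub7⟩
            | exact ⟨_, hL7, m2 _ _ _, m3 _ _ _, sub7⟩
            | exact ⟨_, hL7, m3 _ _ _, m1 _ _ _, sub7⟩
            | exact ⟨_, hL7, m3 _ _ _, m2 _ _ _, sub7⟩
      obtain ⟨L, hLt, huL, hvL, hLsub⟩ := cover
      have htL : t = L := hline_uniq ht hLt huv hut hvt huL hvL
      exact htL ▸ hLsub
    refine ⟨({a, b, c, x, p, q, r} : Finset V), ⟨⟨hR0card, hclosed, sub1⟩, by simp⟩, ?_⟩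
    rintro R ⟨⟨hRcard, hRclosed, hRl⟩, hxR⟩
    have haR : a ∈ R := hRl (by simp)
    have hbR : b ∈ R := hRl (by simp)
    have hcR : c ∈ R := hRl (by simp)
    have mem_of_line : ∀ {u v w : V}, ({u, v, w} : Finset V) ∈ T → u ∈ R → v ∈ R →
        u ≠ v → w ∈ R := by
      intro u v w hL hu hv huv
      have hsub := hRclosed _ hL (by
        have hsubp : ({u, v} : Finset V) ⊆ {u, v, w} ∩ R := by
          intro z hz
          simp only [Finset.mem_insert, Finset.mem_singleton] at hz
          rcases hz with rfl | rfl <;> simp [Finset.mem_inter, hu, hv]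
        calc 2 = ({u, v} : Finset V).card := (Finset.card_pair huv).symm
          _ ≤ _ := Finset.card_le_card hsubp)
      exact hsub (by simp)
    have hpR : p ∈ R := mem_of_line hL2 haR hxR hax
    have hqR : q ∈ R := mem_of_line hL3 hbR hxR hbx
    have hrR : r ∈ R := mem_of_line hL4 hcR hxR hcx
    have hsub : ({a, b, c, x, p, q, r} : Finset V) ⊆ R := by
      intro z hz
      simp only [Finset.mem_insert, Finset.mem_singleton] at hz
      rcases hz with rfl | rfl | rfl | rfl | rfl | rfl | rfl <;> assumption
    exact (Finset.eq_of_subset_of_card_le hsub (by rw [hRcard, hR0card])).symm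
  -- counting
  set S : Finset (Finset V) := Finset.univ.filter
    (fun R => R.card = 7 ∧ (∀ t ∈ T, 2 ≤ (t ∩ R).card → t ⊆ R) ∧
      ({a, b, c} : Finset V) ⊆ R) with hS
  have hmemS : ∀ R : Finset V, R ∈ S ↔ (R.card = 7 ∧
      (∀ t ∈ T, 2 ≤ (t ∩ R).card → t ⊆ R) ∧ ({a, b, c} : Finset V) ⊆ R) := by
    intro R; simp [hS, Finset.mem_filter]
  have hset : {R : Finset V | R.card = 7 ∧
      (∀ t ∈ T, 2 ≤ (t ∩ R).card → t ⊆ R) ∧ ({a, b, c} : Finset V) ⊆ R} = ↑S := by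
    ext R; simp [hmemS R]
  rw [hset, Set.ncard_coe_finset]
  have hpart : Finset.univ \ ({a, b, c} : Finset V) =
      S.biUnion (fun R => R \ {a, b, c}) := by
    ext z
    simp only [Finset.mem_sdiff, Finset.mem_univ, true_and, Finset.mem_biUnion]
    constructor
    · intro hz
      obtain ⟨R, ⟨hR, hzR⟩, _⟩ := key z hz
      exact ⟨R, (hmemS R).2 hR, hzR, hz⟩
    · rintro ⟨R, _, hzR⟩
      exact hzR.2
  have hdisj : ∀ R1 ∈ S, ∀ R2 ∈ S, R1 ≠ R2 →
      Disjoint (R1 \ ({a, b, c} : Finset V)) (R2 \ ({a, b, c} : Finset V)) := by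
    intro R1 h1 R2 h2 hne
    rw [Finset.disjoint_left]
    intro z hz1 hz2
    rw [Finset.mem_sdiff] at hz1 hz2
    obtain ⟨R', _, hu⟩ := key z hz1.2
    exact hne ((hu R1 ⟨(hmemS R1).1 h1, hz1.1⟩).trans (hu R2 ⟨(hmemS R2).1 h2, hz2.1⟩).symm)
  have hc4 : ∀ R ∈ S, (R \ ({a, b, c} : Finset V)).card = 4 := by
    intro R hR
    obtain ⟨hc7, _, hsub⟩ := (hmemS R).1 hR
    rw [Finset.card_sdiff_of_subset hsub, hc7, hlcard]
  have hcount : Fintype.card V - 3 = 4 * S.card := by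
    have h1 : (Finset.univ \ ({a, b, c} : Finset V)).card = Fintype.card V - 3 := by
      rw [Finset.card_sdiff_of_subset (Finset.subset_univ _), hlcard, Finset.card_univ]
    rw [← h1, hpart, Finset.card_biUnion hdisj, Finset.sum_congr rfl hc4,
      Finset.sum_const, smul_eq_mul, mul_comm]
  omega
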